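/- The stabilized semi-implicit scheme for a linear gradient flow is unconditionally energy stable: for the scheme (Φ^{n+1} - Φ^n)/δ = -M(A Φ^{n+1} + C(Φ^{n+1} - Φ^n)) with A symmetric positive semidefinite, C ≥ 0, M > 0, δ > 0, one has the energy decay (1/2)⟨A Φ^{n+1}, Φ^{n+1}⟩ ≤ (1/2)⟨A Φ^n, Φ^n⟩. -/

import Mathlib

open InnerProductSpace

theorem stabilized_scheme_energy_stable
    {H : Type*} [NormedAddCommGroup H] [InnerProductSpace ℝ H]
    (A : H →ₗ[ℝ] H) (hsymm : ∀ u v, ⟪A u, v⟫_ℝ = ⟪u, A v⟫_ℝ)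
    (hpsd : ∀ u, 0 ≤ ⟪A u, u⟫_ℝ)
    (M δ C : ℝ) (hM : 0 < M) (hδ : 0 < δ) (hC : 0 ≤ C)
    (Φ0 Φ1 : H)
    (hscheme : Φ1 - Φ0 = -((δ * M) • (A Φ1 + C • (Φ1 - Φ0)))) :
    ⟪A Φ1, Φ1⟫_ℝ ≤ ⟪A Φ0, Φ0⟫_ℝ := by
  set d := Φ1 - Φ0 with hd
  have hΦ0 : Φ0 = Φ1 - d := by simp [hd]
  have e1 : ⟪A Φ0, Φ0⟫_ℝ = ⟪A Φ1, Φ1⟫_ℝ - 2 * ⟪A Φ1, d⟫_ℝ + ⟪A d, d⟫_ℝ := by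
    rw [hΦ0]
    have h1 : ⟪A d, Φ1⟫_ℝ = ⟪A Φ1, d⟫_ℝ := by
      rw [hsymm, real_inner_comm]
    simp [map_sub, inner_sub_left, inner_sub_right, h1]
    ring
  have e2 : ⟪d, d⟫_ℝ = -(δ * M) * (⟪A Φ1, d⟫_ℝ + C * ⟪d, d⟫_ℝ) := by
    have := congrArg (fun x => ⟪x, d⟫_ℝ) hscheme
    simp [inner_add_left, inner_smul_left, inner_neg_left] at this
    rw [real_inner_self_eq_norm_sq]
    linarith [this]
  have hdd : 0 ≤ ⟪d, d⟫_ℝ := real_inner_self_nonneg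
  have hAd : 0 ≤ ⟪A d, d⟫_ℝ := hpsd d
  have hAΦ1d : ⟪A Φ1, d⟫_ℝ ≤ 0 := by
    nlinarith [mul_pos hδ hM, mul_nonneg hC hdd]
  linarith [e1]
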